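/- Define measures μ_n on ℕ recursively by μ_0 = 0 and μ_{n+1} = (1/2) · δ_1 + (1/2) · Measure.map (k ↦ k+1) μ_n. Then for every set U ⊆ ℕ, the supremum ⨆_n μ_n(U) equals ∑_{k ∈ U, k ≥ 1} (1/2)^k; that is, the least upper bound of the unfoldings is the geometric distribution with parameter 1/2 supported on {1,2,3,…}. -/

import Mathlib

open MeasureTheory

/-- Let `μ n` be the finite unfoldings of the recursive geometric(1/2) sampler:
`μ 0 = 0` and `μ (n+1) = (1/2) • δ_1 + (1/2) • Measure.map (k ↦ k+1) (μ n)`.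
Then for every set `U ⊆ ℕ`, `⨆ n, μ n U = ∑_{k ∈ U, 1 ≤ k} (1/2)^k`: the least upper
bound of the unfoldings is the geometric(1/2) distribution supported on `{1, 2, 3, …}`. -/
theorem geometric_unfoldings_sup
    (μ : ℕ → Measure ℕ)
    (h0 : μ 0 = 0)
    (hrec : ∀ n : ℕ, μ (n + 1) =
      (1 / 2 : ENNReal) • Measure.dirac 1 +
      (1 / 2 : ENNReal) • Measure.map (fun k => k + 1) (μ n)) :
    ∀ U : Set ℕ, (⨆ n, μ n U) =
      ∑' k : U, if 1 ≤ (k : ℕ) then (1 / 2 : ENNReal) ^ (k : ℕ) else 0 := by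
  have hsingle : ∀ n k : ℕ, μ n {k} =
      if 1 ≤ k ∧ k ≤ n then (1 / 2 : ENNReal) ^ k else 0 := by
    intro n
    induction n with
    | zero =>
      intro k
      simp only [h0, Measure.coe_zero, Pi.zero_apply]
      rw [if_neg (by omega)]
    | succ n ih =>
      intro k
      rw [hrec]
      have hmap : Measure.map (fun k => k + 1) (μ n) {k} =
          μ n ((fun k => k + 1) ⁻¹' {k}) :=
        Measure.map_apply (measurable_add_const 1) (MeasurableSet.singleton k)
      match k with
      | 0 =>
        have : ((fun k => k + 1) ⁻¹' ({0} : Set ℕ)) = ∅ := by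
          ext x; simp
        simp [hmap, this]
      | (m+1) =>
        have : ((fun k => k + 1) ⁻¹' ({m+1} : Set ℕ)) = {m} := by
          ext x; simp
        rw [Measure.add_apply, Measure.smul_apply, Measure.smul_apply, hmap, this,
          Measure.dirac_apply, ih m]
        rcases Nat.eq_zero_or_pos m with hm | hm
        · subst hm; simp
        · have h1 : (1:ℕ) ∉ ({m+1} : Set ℕ) := by simp; omega
          rw [Set.indicator_of_notMem h1]
          by_cases hmn : m ≤ n
          · rw [if_pos ⟨hm, hmn⟩, if_pos (by constructor <;> omega)]
            simp only [smul_eq_mul, mul_zero, zero_add, pow_succ]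
            ring
          · rw [if_neg (fun h => hmn h.2), if_neg (fun h => hmn (by omega))]
            simp
  intro U
  have hU : ∀ n : ℕ, μ n U = ∑' k : U,
      if 1 ≤ (k : ℕ) ∧ (k : ℕ) ≤ n then (1 / 2 : ENNReal) ^ (k : ℕ) else 0 := by
    intro n
    rw [← Measure.tsum_indicator_apply_singleton (μ n) U (by measurability)]
    rw [← tsum_subtype U (fun k => μ n {k})]
    exact tsum_congr fun k => hsingle n k
  simp_rw [hU]
  -- interchange sup and tsum via monotone convergence
  have hmono : ∀ (k : U), Monotone (fun n : ℕ =>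
      if 1 ≤ (k : ℕ) ∧ (k : ℕ) ≤ n then (1 / 2 : ENNReal) ^ (k : ℕ) else 0) := by
    intro k a b hab
    dsimp only
    by_cases h : 1 ≤ (k : ℕ) ∧ (k : ℕ) ≤ a
    · rw [if_pos h, if_pos ⟨h.1, h.2.trans hab⟩]
    · rw [if_neg h]; exact zero_le
  have hswap : (⨆ n, ∑' k : U,
      if 1 ≤ (k : ℕ) ∧ (k : ℕ) ≤ n then (1 / 2 : ENNReal) ^ (k : ℕ) else 0)
      = ∑' k : U, ⨆ n, (if 1 ≤ (k : ℕ) ∧ (k : ℕ) ≤ n then (1 / 2 : ENNReal) ^ (k : ℕ) else 0) := by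
    simp_rw [← MeasureTheory.lintegral_count]
    rw [← lintegral_iSup (fun n => measurable_of_countable _) (fun a b hab k => hmono k hab)]
  rw [hswap]
  refine tsum_congr fun k => ?_
  by_cases hk : 1 ≤ (k : ℕ)
  · rw [if_pos hk]
    refine le_antisymm (iSup_le fun n => ?_) (le_iSup_of_le (k : ℕ) (by rw [if_pos ⟨hk, le_rfl⟩]))
    split
    · exact le_rfl
    · exact zero_le
  · rw [if_neg hk]
    exact le_antisymm (iSup_le fun n => by rw [if_neg (by tauto)]) zero_le
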